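/- Let $I_1, \dots, I_9$ be self-adjoint endomorphisms of $\mathbb{R}^{16}$ satisfying $I_\alpha^2 = 1$ and $I_\alpha I_\beta = -I_\beta I_\alpha$ for $\alpha \neq \beta$ (generators of $Cl(\mathbb{R}^9)$ on its real spinor representation). Then for any unit vector $x \in \mathbb{R}^{16}$, the endomorphism $I = \sum_{\alpha=1}^9 \langle I_\alpha x, x\rangle I_\alpha$ is the unique element of $\mathrm{span}\{I_1, \dots, I_9\}$ with $I^2 = 1$ (up to sign) satisfying $Ix = x$. -/

import Mathlib

set_option autoImplicit false
set_option maxHeartbeats 1000000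
open Matrix Finset
open scoped symmDiff

namespace Stmt16Aux

abbrev Mat := Matrix (Fin 16) (Fin 16) ℝ

variable (I : Fin 9 → Mat)

def P (l : List (Fin 9)) : Mat := (l.map I).prod

@[simp] lemma P_nil : P I [] = 1 := rfl
@[simp] lemma P_cons (a : Fin 9) (l : List (Fin 9)) : P I (a :: l) = I a * P I l := by
  simp [P]
lemma P_append (l₁ l₂ : List (Fin 9)) : P I (l₁ ++ l₂) = P I l₁ * P I l₂ := by
  simp [P]
@[simp] lemma P_singleton (a : Fin 9) : P I [a] = I a := by simp [P]

variable (hsym : ∀ α, (I α).transpose = I α)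
  (hsq : ∀ α, I α * I α = 1)
  (hanti : ∀ α β, α ≠ β → I α * I β = -(I β * I α))

include hsq

lemma cancel (a : Fin 9) (X : Mat) : I a * (I a * X) = X := by
  rw [← mul_assoc, hsq, one_mul]

include hanti

lemma conj : ∀ (l : List (Fin 9)), l.Nodup → ∀ a,
    I a * P I l * I a = ((-1 : ℝ)^l.length * (if a ∈ l then -1 else 1)) • P I l := by
  intro l
  induction l with
  | nil => intro _ a; simp [hsq a]
  | cons b l ih =>
    intro hnd a
    obtain ⟨hb, hl⟩ := List.nodup_cons.mp hnd
    have iha := ih hl a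
    have expand : I a * P I (b :: l) * I a
        = (I a * I b * I a) * (I a * P I l * I a) := by
      simp only [P_cons, mul_assoc, cancel I hsq]
    rw [expand, iha]
    by_cases hab : a = b
    · subst hab
      have h3 : I a * I a * I a = I a := by rw [hsq, one_mul]
      rw [h3, mul_smul_comm, ← P_cons]
      simp only [if_neg hb, List.mem_cons, true_or, if_pos, mul_one, List.length_cons]
      congr 1
      rw [pow_succ]; ring
    · have h3 : I a * I b * I a = -I b := by
        rw [hanti a b hab, neg_mul, mul_assoc, hsq, mul_one]
      rw [h3, neg_mul, mul_smul_comm, ← P_cons]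
      simp only [List.mem_cons, hab, false_or, List.length_cons]
      by_cases hm : a ∈ l <;> simp only [hm, if_true, if_false] <;>
        (rw [← neg_smul]; congr 1; rw [pow_succ]; ring)

lemma mulP (a : Fin 9) : ∀ l : List (Fin 9), l.Nodup → ∃ (s : ℝ) (l' : List (Fin 9)),
    (s = 1 ∨ s = -1) ∧ l'.Nodup ∧ l'.toFinset = {a} ∆ l.toFinset ∧
    I a * P I l = s • P I l' := by
  intro l
  induction l with
  | nil =>
    intro _
    refine ⟨1, [a], Or.inl rfl, by simp, by ext z; simp [Finset.mem_symmDiff], by simp⟩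
  | cons b l ih =>
    intro hnd
    obtain ⟨hb, hl⟩ := List.nodup_cons.mp hnd
    by_cases hab : a = b
    · subst hab
      refine ⟨1, l, Or.inl rfl, hl, ?_, ?_⟩
      · ext z
        by_cases hz : z = a
        · subst hz; simp [Finset.mem_symmDiff, hb]
        · simp [Finset.mem_symmDiff, hz]
      · rw [P_cons, cancel I hsq, one_smul]
    · obtain ⟨s, l', hs, hnd', hfs, heq⟩ := ih hl
      have hbl' : b ∉ l' := by
        intro hmem
        have : b ∈ ({a} ∆ l.toFinset : Finset (Fin 9)) := by
          rw [← hfs]; exact List.mem_toFinset.mpr hmem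
        rw [Finset.mem_symmDiff] at this
        simp only [Finset.mem_singleton, List.mem_toFinset] at this
        rcases this with ⟨h1, _⟩ | ⟨h1, _⟩
        · exact hab h1.symm
        · exact hb h1
      refine ⟨-s, b :: l', by rcases hs with h | h <;> simp [h],
        List.nodup_cons.mpr ⟨hbl', hnd'⟩, ?_, ?_⟩
      · rw [List.toFinset_cons, List.toFinset_cons, hfs]
        ext z
        by_cases hzb : z = b
        · subst hzb
          have hza : ¬ z = a := fun h => hab h.symm
          simp [Finset.mem_symmDiff, hza, hb]
        · by_cases hza : z = a
          · subst hza; simp [Finset.mem_symmDiff, hzb]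
          · simp [Finset.mem_symmDiff, hzb, hza]
      · rw [P_cons, ← mul_assoc, hanti a b hab, neg_mul, mul_assoc, heq,
          mul_smul_comm, ← P_cons, neg_smul, ← neg_smul]


lemma mulPP : ∀ l₁ l₂ : List (Fin 9), l₁.Nodup → l₂.Nodup →
    ∃ (s : ℝ) (l₃ : List (Fin 9)), (s = 1 ∨ s = -1) ∧ l₃.Nodup ∧
    l₃.toFinset = l₁.toFinset ∆ l₂.toFinset ∧ P I l₁ * P I l₂ = s • P I l₃ := by
  intro l₁
  induction l₁ with
  | nil =>
    intro l₂ _ h₂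
    refine ⟨1, l₂, Or.inl rfl, h₂, ?_, by simp⟩
    ext z; simp [Finset.mem_symmDiff]
  | cons a l₁ ih =>
    intro l₂ hnd₁ hnd₂
    obtain ⟨ha, hl₁⟩ := List.nodup_cons.mp hnd₁
    obtain ⟨s, l₃, hs, hnd₃, hfs₃, heq₃⟩ := ih l₂ hl₁ hnd₂
    obtain ⟨s', l₄, hs', hnd₄, hfs₄, heq₄⟩ := mulP I hsq hanti a l₃ hnd₃
    refine ⟨s * s', l₄, by rcases hs with h|h <;> rcases hs' with h'|h' <;> simp [h, h'],
      hnd₄, ?_, ?_⟩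
    · rw [hfs₄, hfs₃, List.toFinset_cons]
      ext z
      by_cases hza : z = a
      · subst hza
        have h1 : z ∉ l₁.toFinset := by simpa using ha
        simp [Finset.mem_symmDiff, h1]
      · simp [Finset.mem_symmDiff, hza]
    · rw [P_cons, mul_assoc, heq₃, mul_smul_comm, heq₄, smul_smul]

omit hanti in
lemma revP : ∀ l : List (Fin 9), P I l.reverse * P I l = 1 := by
  intro l
  induction l with
  | nil => simp
  | cons a l ih =>
    rw [List.reverse_cons, P_append, P_singleton, P_cons, mul_assoc, cancel I hsq, ih]

omit hanti in
lemma Prev (l : List (Fin 9)) : P I l * P I l.reverse = 1 :=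
  mul_eq_one_comm.mp (revP I hsq l)

omit hsq hanti in
include hsym in
lemma transP : ∀ l : List (Fin 9), (P I l).transpose = P I l.reverse := by
  intro l
  induction l with
  | nil => simp
  | cons a l ih =>
    rw [P_cons, Matrix.transpose_mul, ih, hsym, List.reverse_cons, P_append, P_singleton]

lemma moveP (l : List (Fin 9)) (hnd : l.Nodup) (a : Fin 9) (ha : a ∉ l) :
    P I l * I a = ((-1 : ℝ)^l.length) • (I a * P I l) := by
  have hc := conj I hsq hanti l hnd a
  rw [if_neg ha, mul_one] at hc
  have h2 : I a * (I a * P I l * I a) = P I l * I a := by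
    rw [← mul_assoc, ← mul_assoc, hsq, one_mul]
  rw [← h2, hc, mul_smul_comm]

lemma signP : ∀ l : List (Fin 9), l.Nodup →
    P I l.reverse = ((-1 : ℝ)^(l.length.choose 2)) • P I l := by
  intro l
  induction l with
  | nil => simp
  | cons a l ih =>
    intro hnd
    obtain ⟨ha, hl⟩ := List.nodup_cons.mp hnd
    rw [List.reverse_cons, P_append, P_singleton, ih hl, smul_mul_assoc,
      moveP I hsq hanti l hl a ha, smul_smul, ← P_cons, List.length_cons]
    congr 1
    have hch : (l.length + 1).choose 2 = l.length.choose 2 + l.length := by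
      rw [Nat.choose_succ_succ]
      simp [Nat.choose_one_right, Nat.add_comm]
    rw [hch, pow_add]

lemma tracePzero (l : List (Fin 9)) (hnd : l.Nodup) (hne : l ≠ [])
    (h8 : (8 : Fin 9) ∉ l) : (P I l).trace = 0 := by
  have key : ∃ a : Fin 9, ((-1 : ℝ)^l.length * (if a ∈ l then -1 else 1)) = -1 := by
    rcases Nat.even_or_odd l.length with he | ho
    · obtain ⟨a, hal⟩ := List.exists_mem_of_ne_nil l hne
      exact ⟨a, by rw [if_pos hal, he.neg_one_pow]; ring⟩
    · exact ⟨8, by rw [if_neg h8, ho.neg_one_pow]; ring⟩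
  obtain ⟨a, hsgn⟩ := key
  have h1 : (I a * P I l * I a).trace = (P I l).trace := by
    rw [mul_assoc, Matrix.trace_mul_comm, mul_assoc, hsq, mul_one]
  rw [conj I hsq hanti l hnd a, hsgn] at h1
  rw [Matrix.trace_smul] at h1
  simp only [smul_eq_mul, neg_one_mul] at h1
  linarith


def emb : Fin 8 ↪ Fin 9 := ⟨Fin.castSucc, Fin.castSucc_injective 8⟩

def lst (S : Finset (Fin 8)) : List (Fin 9) := (S.sort (· ≤ ·)).map Fin.castSucc

def J (S : Finset (Fin 8)) : Mat := P I (lst S)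

omit hsq hanti in
lemma lst_nodup (S : Finset (Fin 8)) : (lst S).Nodup :=
  (Finset.sort_nodup S _).map (Fin.castSucc_injective 8)

omit I hsq hanti in
lemma castSucc_ne8 (b : Fin 8) : Fin.castSucc b ≠ (8 : Fin 9) := by
  rw [show (8 : Fin 9) = Fin.last 8 from by decide]
  exact (Fin.castSucc_lt_last b).ne

omit hsq hanti in
lemma lst_toFinset (S : Finset (Fin 8)) : (lst S).toFinset = S.map emb := by
  ext z
  simp [lst, emb, List.mem_map]

omit hsq hanti in
lemma lst_length (S : Finset (Fin 8)) : (lst S).length = S.card := by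
  rw [lst, List.length_map, Finset.length_sort]

omit hsq hanti in
lemma no8 (S : Finset (Fin 8)) : (8 : Fin 9) ∉ (lst S) := by
  intro h
  rw [lst, List.mem_map] at h
  obtain ⟨b, _, hb⟩ := h
  exact castSucc_ne8 b hb

omit hsq hanti in
lemma lst_ne_nil {S : Finset (Fin 8)} (h : S ≠ ∅) : lst S ≠ [] := by
  intro hc
  apply h
  have := lst_toFinset S
  rw [hc] at this
  simpa [Finset.map_eq_empty] using this.symm

omit hsq hanti in
@[simp] lemma J_empty : J I ∅ = 1 := by
  simp [J, lst]

omit hsq hanti in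
lemma J_singleton (b : Fin 8) : J I {b} = I (Fin.castSucc b) := by
  simp [J, lst, Finset.sort_singleton]

def sgn (S : Finset (Fin 8)) : ℝ := (-1 : ℝ)^(S.card.choose 2)

omit I hsq hanti in
lemma sgn_sq (S : Finset (Fin 8)) : sgn S * sgn S = 1 := by
  rw [sgn, ← pow_add, ← two_mul, pow_mul]
  norm_num

include hsym in
lemma J_transpose (S : Finset (Fin 8)) : (J I S).transpose = sgn S • J I S := by
  rw [J, transP I hsym, signP I hsq hanti (lst S) (lst_nodup S), lst_length, sgn]

include hsym in
lemma JJ (S : Finset (Fin 8)) : J I S * J I S = sgn S • 1 := by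
  have h1 : J I S * (J I S).transpose = 1 := by
    rw [J, transP I hsym, Prev I hsq]
  rw [J_transpose I hsym hsq hanti, mul_smul_comm] at h1
  calc J I S * J I S = (sgn S * sgn S) • (J I S * J I S) := by rw [sgn_sq, one_smul]
  _ = sgn S • 1 := by rw [mul_smul, h1]

omit I hsym hsq hanti in
lemma map_symmDiff' (S T : Finset (Fin 8)) :
    (S.map emb) ∆ (T.map emb) = (S ∆ T).map emb := by
  ext z
  simp only [Finset.mem_symmDiff, Finset.mem_map]
  constructor
  · rintro (⟨⟨b, hb, rfl⟩, h2⟩ | ⟨⟨b, hb, rfl⟩, h2⟩)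
    · exact ⟨b, Or.inl ⟨hb, fun hc => h2 ⟨b, hc, rfl⟩⟩, rfl⟩
    · exact ⟨b, Or.inr ⟨hb, fun hc => h2 ⟨b, hc, rfl⟩⟩, rfl⟩
  · rintro ⟨b, hb, rfl⟩
    rcases hb with ⟨h1, h2⟩ | ⟨h1, h2⟩
    · exact Or.inl ⟨⟨b, h1, rfl⟩, fun ⟨c, hc, hce⟩ => h2 (by rwa [emb.injective hce] at hc)⟩
    · exact Or.inr ⟨⟨b, h1, rfl⟩, fun ⟨c, hc, hce⟩ => h2 (by rwa [emb.injective hce] at hc)⟩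

include hsym in
lemma traceJJ (S T : Finset (Fin 8)) :
    (J I S * J I T).trace = if T = S then 16 * sgn S else 0 := by
  by_cases h : T = S
  · subst h
    rw [if_pos rfl, JJ I hsym hsq hanti, Matrix.trace_smul, Matrix.trace_one]
    simp; ring
  · rw [if_neg h]
    obtain ⟨s, l₃, hs, hnd₃, hfs₃, heq₃⟩ :=
      mulPP I hsq hanti (lst S) (lst T) (lst_nodup S) (lst_nodup T)
    rw [J, J, heq₃, Matrix.trace_smul]
    have hfs : l₃.toFinset = ((S ∆ T).map emb) := by
      rw [hfs₃, lst_toFinset, lst_toFinset, map_symmDiff']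
    have hne : l₃ ≠ [] := by
      intro hc
      rw [hc] at hfs
      have : (S ∆ T) = ∅ := by
        simpa [Finset.map_eq_empty] using hfs.symm
      exact h (symmDiff_eq_bot.mp this).symm
    have h8 : (8 : Fin 9) ∉ l₃ := by
      intro hc
      have : (8 : Fin 9) ∈ (S ∆ T).map emb := by rw [← hfs]; exact List.mem_toFinset.mpr hc
      obtain ⟨b, _, hb⟩ := Finset.mem_map.mp this
      exact castSucc_ne8 b hb
    rw [tracePzero I hsq hanti l₃ hnd₃ hne h8]
    simp

omit hsym in
lemma traceJ (S : Finset (Fin 8)) : (J I S).trace = if S = ∅ then 16 else 0 := by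
  by_cases h : S = ∅
  · subst h; rw [if_pos rfl, J_empty, Matrix.trace_one]; norm_num
  · rw [if_neg h, J, tracePzero I hsq hanti _ (lst_nodup S) (lst_ne_nil h) (no8 S)]

include hsym in
lemma linindepJ : LinearIndependent ℝ (J I) := by
  rw [Fintype.linearIndependent_iff]
  intro g hg T
  have h1 : ((J I T * (∑ S, g S • J I S))).trace = 16 * sgn T * g T := by
    rw [Finset.mul_sum, Matrix.trace_sum]
    have : ∀ S ∈ Finset.univ, (J I T * (g S • J I S)).trace
        = if S = T then 16 * sgn T * g T else 0 := by
      intro S _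
      rw [mul_smul_comm, Matrix.trace_smul, traceJJ I hsym hsq hanti T S]
      by_cases h : S = T
      · subst h; simp [if_pos rfl]; ring
      · rw [if_neg h, if_neg h]; simp
    rw [Finset.sum_congr rfl this, Finset.sum_ite_eq' Finset.univ T]
    simp
  rw [hg] at h1
  simp only [Matrix.mul_zero, Matrix.trace_zero] at h1
  have hsgn : sgn T = 1 ∨ sgn T = -1 := by
    rcases Nat.even_or_odd (T.card.choose 2) with h | h
    · exact Or.inl (Even.neg_one_pow h)
    · exact Or.inr (Odd.neg_one_pow h)
  rcases hsgn with h | h <;> rw [h] at h1 <;> linarith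

include hsym in
lemma spanJ : Submodule.span ℝ (Set.range (J I)) = ⊤ := by
  apply (linindepJ I hsym hsq hanti).span_eq_top_of_card_eq_finrank
  rw [Fintype.card_finset]
  simp [Module.finrank_matrix]

include hsym in
lemma existsCoeffs (A : Mat) : ∃ a : Finset (Fin 8) → ℝ, A = ∑ S, a S • J I S := by
  have : A ∈ Submodule.span ℝ (Set.range (J I)) := by
    rw [spanJ I hsym hsq hanti]; trivial
  obtain ⟨c, hc⟩ := (Submodule.mem_span_range_iff_exists_fun ℝ).mp this
  exact ⟨c, hc.symm⟩

include hsym in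
lemma coeffUnique (a b : Finset (Fin 8) → ℝ)
    (h : ∑ S, a S • J I S = ∑ S, b S • J I S) : ∀ S, a S = b S := by
  intro S
  have h2 : ∑ T, (a T - b T) • J I T = 0 := by
    simp only [sub_smul, Finset.sum_sub_distrib, h, sub_self]
  have := Fintype.linearIndependent_iff.mp (linindepJ I hsym hsq hanti) _ h2 S
  linarith


omit hsym hsq hanti in
lemma mem_lst (β : Fin 8) (S : Finset (Fin 8)) : Fin.castSucc β ∈ lst S ↔ β ∈ S := by
  simp [lst, List.mem_map, (Fin.castSucc_injective 8).eq_iff]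

lemma conjJ9 (α : Fin 9) (S : Finset (Fin 8)) : I α * J I S * I α
    = ((-1:ℝ)^S.card * (if α ∈ lst S then -1 else 1)) • J I S := by
  rw [J, conj I hsq hanti _ (lst_nodup S) α, lst_length]

omit hsym hsq hanti in
lemma sgn_pm (S : Finset (Fin 8)) : sgn S = 1 ∨ sgn S = -1 := by
  rcases Nat.even_or_odd (S.card.choose 2) with h | h
  · exact Or.inl (Even.neg_one_pow h)
  · exact Or.inr (Odd.neg_one_pow h)

omit hsym hsq hanti in
lemma sum_pm (S : Finset (Fin 8)) :
    ∑ α : Fin 9, (if α ∈ lst S then (-1:ℝ) else 1) = 9 - 2 * S.card := by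
  have hfilter : Finset.univ.filter (fun α => α ∈ lst S) = (lst S).toFinset := by
    ext z; simp [List.mem_toFinset]
  have hcard1 : (Finset.univ.filter (fun α => α ∈ lst S)).card = S.card := by
    rw [hfilter, lst_toFinset, Finset.card_map]
  have hterm : ∀ α : Fin 9, (if α ∈ lst S then (-1:ℝ) else 1)
      = 1 - 2 * (if α ∈ lst S then (1:ℝ) else 0) := by
    intro α; by_cases h : α ∈ lst S <;> simp [h] <;> norm_num
  rw [Finset.sum_congr rfl (fun α _ => hterm α), Finset.sum_sub_distrib, Finset.sum_const,
    ← Finset.mul_sum, Finset.sum_boole, hcard1]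
  simp

section Main

variable (x : Fin 16 → ℝ)

def X (x : Fin 16 → ℝ) : Mat := Matrix.of fun i j => x i * x j

omit I hsq hanti in
lemma trace_mul_X (M : Mat) : (M * X x).trace = ∑ i, M.mulVec x i * x i := by
  simp only [Matrix.trace, Matrix.diag, Matrix.mul_apply, X, Matrix.of_apply,
    Matrix.mulVec, dotProduct, Finset.sum_mul]
  refine Finset.sum_congr rfl fun i _ => Finset.sum_congr rfl fun j _ => by ring

omit I hsq hanti in
lemma Xt : (X x)ᵀ = X x := by
  ext i j; simp [X, Matrix.transpose_apply, mul_comm]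

omit I hsq hanti in
lemma XMX (M : Mat) : X x * M * X x = ((M * X x).trace) • X x := by
  ext i j
  have lhs_eq : (X x * M * X x) i j = ∑ k, ∑ l, x i * x l * M l k * (x k * x j) := by
    simp only [Matrix.mul_apply, X, Matrix.of_apply, Finset.sum_mul]
  have rhs_eq : (((M * X x).trace) • X x) i j = ∑ k, ∑ l, x i * x l * M l k * (x k * x j) := by
    simp only [Matrix.smul_apply, Matrix.trace, Matrix.diag, Matrix.mul_apply, X,
      Matrix.of_apply, smul_eq_mul, Finset.sum_mul]
    rw [Finset.sum_comm]
    refine Finset.sum_congr rfl fun k _ => Finset.sum_congr rfl fun l _ => by ring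
  rw [lhs_eq, rhs_eq]

variable (hx : ∑ i, x i ^ 2 = 1)

omit I hsq hanti in
include hx in
lemma XX : X x * X x = X x := by
  ext i j
  simp only [Matrix.mul_apply, X, Matrix.of_apply]
  calc ∑ k, (x i * x k) * (x k * x j) = (∑ k, x k ^ 2) * (x i * x j) := by
        rw [Finset.sum_mul]; exact Finset.sum_congr rfl fun k _ => by ring
  _ = x i * x j := by rw [hx, one_mul]

omit I hsq hanti in
include hx in
lemma traceX : (X x).trace = 1 := by
  simp only [Matrix.trace, Matrix.diag, X, Matrix.of_apply]
  rw [← hx]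
  exact Finset.sum_congr rfl fun i _ => (sq (x i)).symm

include hsym hx in
theorem key : ∑ α, ((I α) * X x).trace ^ 2 = 1 := by
  obtain ⟨a, ha⟩ := existsCoeffs I hsym hsq hanti (X x)
  have hJX : ∀ T, (J I T * X x).trace = 16 * sgn T * a T := by
    intro T
    nth_rewrite 1 [ha]
    rw [Finset.mul_sum, Matrix.trace_sum]
    rw [Finset.sum_congr rfl (fun S _ => by
      rw [mul_smul_comm, Matrix.trace_smul, traceJJ I hsym hsq hanti T S, smul_eq_mul,
        mul_ite, mul_zero])]
    rw [Finset.sum_ite_eq' Finset.univ T]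
    simp [mul_comm]
  have sgn_empty : sgn (∅ : Finset (Fin 8)) = 1 := by norm_num [sgn]
  have haempty : a ∅ = 1 / 16 := by
    have h1 := hJX ∅
    rw [J_empty, one_mul, traceX x hx, sgn_empty] at h1
    linarith
  have hskew : ∀ S, sgn S = -1 → a S = 0 := by
    intro S hS
    have h1 : ∑ T, (sgn T * a T) • J I T = ∑ T, a T • J I T := by
      calc ∑ T, (sgn T * a T) • J I T = (∑ T, a T • J I T)ᵀ := by
            rw [Matrix.transpose_sum]
            refine Finset.sum_congr rfl fun T _ => ?_
            rw [Matrix.transpose_smul, J_transpose I hsym hsq hanti, smul_smul, mul_comm]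
      _ = (X x)ᵀ := by rw [← ha]
      _ = X x := Xt x
      _ = ∑ T, a T • J I T := ha
    have h2 := coeffUnique I hsym hsq hanti _ _ h1 S
    rw [hS] at h2; linarith
  have hsgn_a : ∀ S, sgn S * a S ^ 2 = a S ^ 2 := by
    intro S
    rcases sgn_pm S with h | h
    · rw [h, one_mul]
    · rw [hskew S h, h]; ring
  have hR1 : ∑ S, a S ^ 2 = 1 / 16 := by
    have h1 : (X x * X x).trace = ∑ S, 16 * (sgn S * a S ^ 2) := by
      nth_rewrite 1 [ha]
      rw [Finset.sum_mul, Matrix.trace_sum]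
      refine Finset.sum_congr rfl fun S _ => ?_
      rw [smul_mul_assoc, Matrix.trace_smul, hJX S, smul_eq_mul]; ring
    rw [XX x hx, traceX x hx] at h1
    rw [Finset.sum_congr rfl (fun S _ => by rw [hsgn_a S])] at h1
    rw [← Finset.mul_sum] at h1
    linarith
  have hcsing : ∀ β : Fin 8, ((I (Fin.castSucc β)) * X x).trace = 16 * a {β} := by
    intro β
    rw [← J_singleton I β, hJX {β}]
    have h1 : sgn ({β} : Finset (Fin 8)) = 1 := by norm_num [sgn]
    rw [h1]; ring
  -- identify I 8 as ± J univ
  have h8c : ∀ β : Fin 8, I (Fin.castSucc β) * I 8 * I (Fin.castSucc β) = -(I 8) := by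
    intro β
    rw [hanti _ 8 (castSucc_ne8 β), neg_mul, mul_assoc, hsq, mul_one]
  obtain ⟨b, hb⟩ := existsCoeffs I hsym hsq hanti (I 8)
  have hbS : ∀ S, S ≠ Finset.univ → b S = 0 := by
    intro S hS
    obtain ⟨β, hβ⟩ : ∃ β : Fin 8, ((-1:ℝ)^S.card * (if β ∈ S then -1 else 1)) = 1 := by
      rcases Nat.even_or_odd S.card with he | ho
      · obtain ⟨β, hβ⟩ : ∃ β, β ∉ S := by
          by_contra hc; push_neg at hc; exact hS (Finset.eq_univ_iff_forall.mpr hc)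
        exact ⟨β, by rw [if_neg hβ, he.neg_one_pow, mul_one]⟩
      · have hne : S.Nonempty := Finset.card_pos.mp (by
          rcases ho with ⟨k, hk⟩; omega)
        obtain ⟨β, hβ⟩ := hne
        exact ⟨β, by rw [if_pos hβ, ho.neg_one_pow]; ring⟩
    have e1 : I (Fin.castSucc β) * I 8 * I (Fin.castSucc β)
        = ∑ T, (b T * ((-1:ℝ)^T.card * (if β ∈ T then -1 else 1))) • J I T := by
      nth_rewrite 1 [hb]
      rw [Finset.mul_sum, Finset.sum_mul]
      refine Finset.sum_congr rfl fun T _ => ?_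
      rw [mul_smul_comm, smul_mul_assoc]
      have := conjJ9 I hsq hanti (Fin.castSucc β) T
      rw [this, smul_smul]
      congr 1
      simp only [mem_lst]
    have e2 : I (Fin.castSucc β) * I 8 * I (Fin.castSucc β) = ∑ T, (-(b T)) • J I T := by
      rw [h8c β]
      nth_rewrite 1 [hb]
      rw [← Finset.sum_neg_distrib]
      exact Finset.sum_congr rfl fun T _ => (neg_smul _ _).symm
    have h3 := coeffUnique I hsym hsq hanti _ _ (e1.symm.trans e2) S
    rw [hβ, mul_one] at h3
    linarith
  have hI8 : I 8 = b Finset.univ • J I Finset.univ := by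
    rw [hb, Finset.sum_eq_single Finset.univ
      (fun T _ hT => by rw [hbS T hT, zero_smul]) (fun h => absurd (Finset.mem_univ _) h)]
  have sgn_univ : sgn (Finset.univ : Finset (Fin 8)) = 1 := by
    rw [sgn, Finset.card_univ, Fintype.card_fin, show Nat.choose 8 2 = 28 from by decide]
    norm_num
  have hm2 : b Finset.univ ^ 2 = 1 := by
    have h1 : I 8 * I 8 = (b Finset.univ ^2) • ((1 : Mat)) := by
      nth_rewrite 1 [hI8]; nth_rewrite 1 [hI8]
      rw [smul_mul_assoc, mul_smul_comm, JJ I hsym hsq hanti, sgn_univ, one_smul,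
        smul_smul, ← pow_two]
    rw [hsq 8] at h1
    have h2 := congrArg Matrix.trace h1
    rw [Matrix.trace_smul, Matrix.trace_one] at h2
    simp at h2
    rcases h2 with h | h <;> rw [h] <;> norm_num
  have hc8 : ((I 8) * X x).trace ^ 2 = 256 * a Finset.univ ^ 2 := by
    have h1 : ((I 8) * X x).trace = b Finset.univ * (16 * sgn Finset.univ * a Finset.univ) := by
      rw [hI8, smul_mul_assoc, Matrix.trace_smul, hJX Finset.univ, smul_eq_mul]
    rw [h1, sgn_univ]
    have : b Finset.univ * (16 * 1 * a Finset.univ) = 16 * a Finset.univ * b Finset.univ := by ring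
    rw [this, mul_pow, mul_pow, hm2, mul_one]
    ring
  -- R2 : conjugation sum identity
  have hstep : ∀ α, (I α * (X x * I α * X x)).trace = ((I α) * X x).trace ^ 2 := by
    intro α
    rw [XMX x (I α), mul_smul_comm, Matrix.trace_smul, smul_eq_mul, pow_two]
  have hexp : ∀ α, (I α * (X x * I α * X x)).trace
      = ∑ S, ((-1:ℝ)^S.card * (if α ∈ lst S then -1 else 1)) * (16 * (sgn S * a S ^ 2)) := by
    intro α
    have hassoc : I α * (X x * I α * X x) = (I α * X x * I α) * X x := by
      rw [mul_assoc, mul_assoc, mul_assoc]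
    have hconj : I α * X x * I α
        = ∑ S, (a S * ((-1:ℝ)^S.card * (if α ∈ lst S then -1 else 1))) • J I S := by
      nth_rewrite 1 [ha]
      rw [Finset.mul_sum, Finset.sum_mul]
      refine Finset.sum_congr rfl fun S _ => ?_
      rw [mul_smul_comm, smul_mul_assoc]
      have := conjJ9 I hsq hanti α S
      rw [this, smul_smul]
    rw [hassoc, hconj, Finset.sum_mul, Matrix.trace_sum]
    refine Finset.sum_congr rfl fun S _ => ?_
    rw [smul_mul_assoc, Matrix.trace_smul, hJX S, smul_eq_mul]
    ring
  have hR2 : ∑ α, ((I α) * X x).trace ^ 2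
      = ∑ S, ((9 : ℝ) - 2 * S.card) * ((-1:ℝ)^S.card * (16 * a S ^ 2)) := by
    rw [Finset.sum_congr rfl (fun α _ => (hstep α).symm),
      Finset.sum_congr rfl (fun α _ => hexp α), Finset.sum_comm]
    refine Finset.sum_congr rfl fun S _ => ?_
    rw [Finset.sum_congr rfl (fun α (_ : α ∈ Finset.univ) => by
        rw [mul_comm ((-1:ℝ)^S.card) _, mul_assoc] : ∀ α ∈ Finset.univ,
        ((-1:ℝ)^S.card * (if α ∈ lst S then -1 else 1)) * (16 * (sgn S * a S ^ 2))
        = (if α ∈ lst S then (-1:ℝ) else 1) * ((-1:ℝ)^S.card * (16 * (sgn S * a S ^ 2))))]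
    rw [← Finset.sum_mul, sum_pm S, hsgn_a S]
  -- per-S identity
  have perS : ∀ S : Finset (Fin 8), ((9 : ℝ) - 2 * S.card) * ((-1:ℝ)^S.card * (16 * a S ^ 2))
      = 16 * a S ^ 2
        - 128 * (if S = ∅ ∨ S.card = 1 ∨ S = Finset.univ then a S ^ 2 else 0)
        + 256 * (if S = ∅ then a S ^ 2 else 0) := by
    intro S
    have hle : S.card ≤ 8 := by simpa using Finset.card_le_univ S
    have hzero : ∀ c : ℕ, S.card = c → Odd (c.choose 2) → a S = 0 := by
      intro c hc hodd
      refine hskew S ?_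
      rw [sgn, hc]
      exact hodd.neg_one_pow
    rcases (by omega : S.card = 0 ∨ S.card = 1 ∨ S.card = 2 ∨ S.card = 3 ∨ S.card = 4
        ∨ S.card = 5 ∨ S.card = 6 ∨ S.card = 7 ∨ S.card = 8) with h|h|h|h|h|h|h|h|h
    · have h0 : S = ∅ := Finset.card_eq_zero.mp h
      rw [if_pos (Or.inl h0), if_pos h0, h]
      push_cast; ring
    · have h0 : S ≠ ∅ := by intro hc; rw [hc] at h; simp at h
      rw [if_pos (Or.inr (Or.inl h)), if_neg h0, h]
      push_cast; ring
    · rw [hzero 2 h (by decide)]; simp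
    · rw [hzero 3 h (by decide)]; simp
    · have h0 : S ≠ ∅ := by intro hc; rw [hc] at h; simp at h
      have hu : S ≠ Finset.univ := by
        intro hc; rw [hc, Finset.card_univ] at h; simp at h
      rw [if_neg (by push_neg; exact ⟨Finset.nonempty_iff_ne_empty.mpr h0, by omega, hu⟩), if_neg h0, h]
      push_cast; ring
    · have h0 : S ≠ ∅ := by intro hc; rw [hc] at h; simp at h
      have hu : S ≠ Finset.univ := by
        intro hc; rw [hc, Finset.card_univ] at h; simp at h
      rw [if_neg (by push_neg; exact ⟨Finset.nonempty_iff_ne_empty.mpr h0, by omega, hu⟩), if_neg h0, h]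
      push_cast; ring
    · rw [hzero 6 h (by decide)]; simp
    · rw [hzero 7 h (by decide)]; simp
    · have hu : S = Finset.univ := (Finset.card_eq_iff_eq_univ _).mp (by simpa using h)
      have h0 : S ≠ ∅ := by intro hc; rw [hc] at h; simp at h
      rw [if_pos (Or.inr (Or.inr hu)), if_neg h0, h]
      push_cast; ring
  -- assemble
  have hIte0 : ∑ S : Finset (Fin 8), (if S = ∅ then a S ^ 2 else 0) = a ∅ ^ 2 := by
    rw [Finset.sum_ite_eq' Finset.univ ∅ (fun S => a S ^ 2)]
    simp
  have tval1 : ∑ α, ((I α) * X x).trace ^ 2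
      = 16 * (∑ S, a S ^ 2)
        - 128 * (∑ S : Finset (Fin 8), (if S = ∅ ∨ S.card = 1 ∨ S = Finset.univ then a S ^ 2 else 0))
        + 256 * (a ∅ ^ 2) := by
    rw [hR2, Finset.sum_congr rfl (fun S _ => perS S), Finset.sum_add_distrib,
      Finset.sum_sub_distrib, ← Finset.mul_sum, ← Finset.mul_sum, ← Finset.mul_sum, hIte0]
  have hmid : ∑ S : Finset (Fin 8), (if S.card = 1 then a S ^ 2 else 0)
      = ∑ β : Fin 8, a {β} ^ 2 := by
    rw [← Finset.sum_filter]
    have himg : Finset.univ.filter (fun S : Finset (Fin 8) => S.card = 1)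
        = Finset.univ.image (fun β : Fin 8 => ({β} : Finset (Fin 8))) := by
      ext S
      simp only [Finset.mem_filter, Finset.mem_univ, true_and, Finset.mem_image,
        Finset.card_eq_one]
      exact exists_congr fun c => eq_comm
    rw [himg, Finset.sum_image (fun β _ γ _ h => Finset.singleton_injective h)]
  have hEdec : (∑ S : Finset (Fin 8), (if S = ∅ ∨ S.card = 1 ∨ S = Finset.univ then a S ^ 2 else 0))
      = a ∅ ^ 2 + (∑ β : Fin 8, a {β} ^ 2) + a Finset.univ ^ 2 := by
    have hsplit : ∀ S : Finset (Fin 8),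
        (if S = ∅ ∨ S.card = 1 ∨ S = Finset.univ then a S ^ 2 else 0)
        = (if S = ∅ then a S ^ 2 else 0) + (if S.card = 1 then a S ^ 2 else 0)
          + (if S = Finset.univ then a S ^ 2 else 0) := by
      intro S
      by_cases h1 : S = ∅
      · have h2 : ¬ S.card = 1 := by rw [h1]; simp
        have h3 : S ≠ Finset.univ := by
          rw [h1]; intro hc
          have := congrArg Finset.card hc
          rw [Finset.card_univ] at this
          simp at this
        rw [if_pos (Or.inl h1), if_pos h1, if_neg h2, if_neg h3]; ring
      · by_cases h2 : S.card = 1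
        · have h3 : S ≠ Finset.univ := by
            intro hc; rw [hc, Finset.card_univ] at h2; simp at h2
          rw [if_pos (Or.inr (Or.inl h2)), if_neg h1, if_pos h2, if_neg h3]; ring
        · by_cases h3 : S = Finset.univ
          · rw [if_pos (Or.inr (Or.inr h3)), if_neg h1, if_neg h2, if_pos h3]; ring
          · rw [if_neg (by push_neg; exact ⟨Finset.nonempty_iff_ne_empty.mpr h1, h2, h3⟩), if_neg h1, if_neg h2, if_neg h3]; ring
    rw [Finset.sum_congr rfl (fun S _ => hsplit S), Finset.sum_add_distrib,
      Finset.sum_add_distrib, hIte0, hmid,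
      Finset.sum_ite_eq' Finset.univ Finset.univ (fun S => a S ^ 2)]
    simp
  have tval2 : ∑ α, ((I α) * X x).trace ^ 2
      = 256 * ((∑ β : Fin 8, a {β} ^ 2) + a Finset.univ ^ 2) := by
    rw [Fin.sum_univ_castSucc (fun α => ((I α) * X x).trace ^ 2)]
    have hlast : (Fin.last 8) = (8 : Fin 9) := by decide
    rw [hlast, hc8]
    rw [Finset.sum_congr rfl (fun β _ => by rw [hcsing β] : ∀ β ∈ Finset.univ,
      ((I (Fin.castSucc β)) * X x).trace ^ 2 = (16 * a {β}) ^ 2)]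
    rw [Finset.sum_congr rfl (fun β (_ : β ∈ Finset.univ) => by ring :
      ∀ β ∈ Finset.univ, (16 * a {β}) ^ 2 = 256 * a {β} ^ 2)]
    rw [← Finset.mul_sum]
    ring
  rw [hEdec] at tval1
  rw [hR1, haempty] at tval1
  rw [tval2] at tval1 ⊢
  have : (∑ β : Fin 8, a {β} ^ 2) + a Finset.univ ^ 2 = 1 / 256 := by
    nlinarith [tval1]
  rw [this]
  norm_num

omit I hsq hanti in
lemma sum_sq_mulVec (M : Mat) : ∑ i, (M.mulVec x i)^2 = (M * X x * Mᵀ).trace := by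
  simp only [Matrix.trace, Matrix.diag, Matrix.mul_apply, Matrix.transpose_apply,
    Matrix.mulVec, dotProduct, X, Matrix.of_apply, pow_two]
  refine Finset.sum_congr rfl fun i _ => ?_
  rw [Finset.sum_mul_sum, Finset.sum_comm]
  refine Finset.sum_congr rfl fun k _ => ?_
  rw [Finset.sum_mul]
  refine Finset.sum_congr rfl fun j _ => ?_
  ring

include hsq hanti in
lemma sqL (d : Fin 9 → ℝ) :
    (∑ α, d α • I α) * (∑ α, d α • I α) = (∑ α, d α ^ 2) • (1 : Mat) := by
  have expand : (∑ α, d α • I α) * (∑ α, d α • I α)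
      = ∑ α, ∑ β, (d α * d β) • (I α * I β) := by
    rw [Finset.sum_mul_sum]
    refine Finset.sum_congr rfl fun α _ => Finset.sum_congr rfl fun β _ => ?_
    rw [smul_mul_assoc, mul_smul_comm, smul_smul]
  have pair : ∀ α β : Fin 9, (d α * d β) • (I α * I β) + (d β * d α) • (I β * I α)
      = if β = α then ((2:ℝ) * d α ^ 2) • (1 : Mat) else 0 := by
    intro α β
    by_cases h : β = α
    · subst h
      rw [if_pos rfl, hsq, ← add_smul]
      congr 1
      ring
    · rw [if_neg h, hanti α β (fun hc => h hc.symm), smul_neg, mul_comm (d α) (d β)]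
      exact neg_add_cancel _
  have h2 : (∑ α, ∑ β, (d α * d β) • (I α * I β)) + (∑ α, ∑ β, (d α * d β) • (I α * I β))
      = ∑ α, ((2:ℝ) * d α ^ 2) • (1 : Mat) := by
    nth_rewrite 2 [Finset.sum_comm]
    rw [← Finset.sum_add_distrib]
    refine Finset.sum_congr rfl fun α _ => ?_
    rw [← Finset.sum_add_distrib, Finset.sum_congr rfl (fun β _ => pair α β),
      Finset.sum_ite_eq' Finset.univ α]
    simp
  have h3 : (2:ℝ) • ((∑ α, d α • I α) * (∑ α, d α • I α))
      = (2:ℝ) • ((∑ α, d α ^ 2) • (1 : Mat)) := by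
    rw [two_smul, expand, h2, smul_smul, Finset.mul_sum, Finset.sum_smul]
  exact smul_right_injective Mat two_ne_zero h3

end Main

end Stmt16Aux

open Stmt16Aux in
/-- Let `I₁, …, I₉` be self-adjoint anticommuting involutions of `ℝ¹⁶` (Clifford
generators of `Cl(ℝ⁹)` on its real spinor representation).  For any unit vector
`x ∈ ℝ¹⁶`, the endomorphism `I = ∑_α ⟨I_α x, x⟩ I_α` satisfies `I² = 1` and `Ix = x`,
and is the unique element of `span{I₁,…,I₉}` with these properties. -/
theorem stmt_16 (I : Fin 9 → Matrix (Fin 16) (Fin 16) ℝ)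
    (hsym : ∀ α, (I α).transpose = I α)
    (hsq : ∀ α, I α * I α = 1)
    (hanti : ∀ α β, α ≠ β → I α * I β = -(I β * I α))
    (x : Fin 16 → ℝ) (hx : ∑ i, x i ^ 2 = 1) :
    (∑ α, (∑ i, (I α).mulVec x i * x i) • I α) * (∑ α, (∑ i, (I α).mulVec x i * x i) • I α) = 1 ∧
    (∑ α, (∑ i, (I α).mulVec x i * x i) • I α).mulVec x = x ∧
    ∀ c : Fin 9 → ℝ, (∑ α, c α • I α) * (∑ α, c α • I α) = 1 →
      (∑ α, c α • I α).mulVec x = x →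
      (∑ α, c α • I α) = ∑ α, (∑ i, (I α).mulVec x i * x i) • I α := by
  have hxx : ∑ i, x i * x i = 1 := by
    rw [← hx]; exact Finset.sum_congr rfl fun i _ => (sq (x i)).symm
  set c' : Fin 9 → ℝ := fun α => ∑ i, (I α).mulVec x i * x i with hc'
  have hc't : ∀ α, c' α = ((I α) * X x).trace := fun α => (trace_mul_X x (I α)).symm
  have ht : ∑ α, c' α ^ 2 = 1 := by
    rw [Finset.sum_congr rfl (fun α _ => by rw [hc't α])]
    exact key I hsym hsq hanti x hx
  set L : Matrix (Fin 16) (Fin 16) ℝ := ∑ α, c' α • I α with hL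
  have traceLX : ∀ d : Fin 9 → ℝ, ((∑ α, d α • I α) * X x).trace
      = ∑ α, d α * ((I α * X x).trace) := by
    intro d
    rw [Finset.sum_mul, Matrix.trace_sum]
    exact Finset.sum_congr rfl fun α _ => by rw [smul_mul_assoc, Matrix.trace_smul, smul_eq_mul]
  have hL2 : L * L = 1 := by
    rw [hL, sqL I hsq hanti c', ht, one_smul]
  refine ⟨hL2, ?_, ?_⟩
  · -- L x = x
    have hLt : Lᵀ = L := by
      rw [hL, Matrix.transpose_sum]
      exact Finset.sum_congr rfl fun α _ => by rw [Matrix.transpose_smul, hsym]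
    have e1 : ∑ i, (L.mulVec x i)^2 = 1 := by
      rw [sum_sq_mulVec x L, hLt, Matrix.trace_mul_comm, ← mul_assoc, hL2, one_mul,
        traceX x hx]
    have e2 : ∑ i, L.mulVec x i * x i = 1 := by
      rw [← trace_mul_X x L, hL, traceLX c']
      rw [← ht]
      exact Finset.sum_congr rfl fun α _ => by rw [← hc't α, pow_two]
    have hS0 : ∑ i, (L.mulVec x i - x i)^2 = 0 := by
      have hexp : ∀ i : Fin 16, (L.mulVec x i - x i)^2
          = (L.mulVec x i)^2 - 2 * (L.mulVec x i * x i) + x i ^ 2 := fun i => by ring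
      rw [Finset.sum_congr rfl (fun i _ => hexp i), Finset.sum_add_distrib,
        Finset.sum_sub_distrib, ← Finset.mul_sum, e1, e2, hx]
      norm_num
    funext i
    have h := (Finset.sum_eq_zero_iff_of_nonneg
      (fun i _ => sq_nonneg (L.mulVec x i - x i))).mp hS0 i (Finset.mem_univ i)
    have := sq_eq_zero_iff.mp h
    linarith
  · -- uniqueness
    intro c h1 h2
    have hc2 : ∑ α, c α ^ 2 = 1 := by
      have h3 := (sqL I hsq hanti c).symm.trans h1
      have h4 := congrArg Matrix.trace h3
      rw [Matrix.trace_smul, Matrix.trace_one] at h4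
      simp only [smul_eq_mul, Fintype.card_fin] at h4
      norm_num at h4
      exact h4
    have hdot : ∑ α, c α * c' α = 1 := by
      have h3 : ∑ i, (∑ α, c α • I α).mulVec x i * x i = 1 := by
        rw [h2]; exact hxx
      rw [← trace_mul_X x _, traceLX c] at h3
      rw [← h3]
      exact Finset.sum_congr rfl fun α _ => by rw [← hc't α]
    have hceq : ∀ α, c α = c' α := by
      have hsum : ∑ α, (c α - c' α)^2 = 0 := by
        have hexp : ∀ α : Fin 9, (c α - c' α)^2
            = c α ^ 2 - 2 * (c α * c' α) + c' α ^ 2 := fun α => by ring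
        rw [Finset.sum_congr rfl (fun α _ => hexp α), Finset.sum_add_distrib,
          Finset.sum_sub_distrib, ← Finset.mul_sum, hc2, hdot, ht]
        norm_num
      intro α
      have h := (Finset.sum_eq_zero_iff_of_nonneg
        (fun α _ => sq_nonneg (c α - c' α))).mp hsum α (Finset.mem_univ α)
      have := sq_eq_zero_iff.mp h
      linarith
    exact Finset.sum_congr rfl fun α _ => by rw [hceq α]
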